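/- Let R > 1 and let (a_n)_{n∈ℤ} be nonzero reals with 1/R < |a_n| < R for all n, and set λ_n = |a_n| and Π(k,l) = λ_k·λ_{k+1}·…·λ_{k+l−1} for k ∈ ℤ, l ≥ 1. If the sequence of linear maps A_n : ℝ → ℝ, A_n v = a_n v, has property SG(γ) for some γ ∈ (0,1), then there exists N ≥ 1 such that for every i ∈ ℤ, either Π(i,N) > 2 or Π(i+N,N) < 1/2. -/

import Mathlib

noncomputable section

/-- Slow growth property with exponent γ for the one-dimensional system
`v ↦ a_n * v`. -/
def SG1 (a : ℤ → ℝ) (γ : ℝ) : Prop :=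
  ∃ L : ℝ, 0 < L ∧ ∀ (i : ℤ) (N : ℕ), 1 ≤ N →
    ∀ w : ℤ → ℝ, (∀ k : ℤ, i + 1 ≤ k → k ≤ i + N → |w k| ≤ 1) →
    ∃ v : ℤ → ℝ,
      (∀ k : ℤ, i ≤ k → k ≤ i + N - 1 → v (k + 1) = a k * v k + w (k + 1)) ∧
      (∀ k : ℤ, i ≤ k → k ≤ i + N → |v k| ≤ L * (N : ℝ) ^ γ)

/-- `Pi lam k l = lam_k ⋯ lam_{k+l-1}`. -/
def Pii (lam : ℤ → ℝ) (k : ℤ) (l : ℕ) : ℝ := ∏ j ∈ Finset.range l, lam (k + j)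

private lemma log_lb_aux (M : ℝ) (hM : 1 ≤ M) : 1/(2*M) ≤ Real.log (1 + 1/M) := by
  have hM0 : (0:ℝ) < M := by linarith
  have h1 := Real.log_le_sub_one_of_pos (show (0:ℝ) < (1+1/M)⁻¹ by positivity)
  rw [Real.log_inv] at h1
  have h2 : (1+1/M)⁻¹ = M/(M+1) := by
    rw [inv_eq_one_div]; field_simp
  rw [h2] at h1
  have h3 : 1 - M/(M+1) = 1/(M+1) := by field_simp; ring
  have h4 : 1/(2*M) ≤ 1/(M+1) :=
    one_div_le_one_div_of_le (by linarith) (by linarith)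
  linarith

private lemma core_lemma (M : ℝ) (hM : 1 ≤ M) (N : ℕ) (hN : 1 ≤ N) (Q g : ℕ → ℝ)
    (hQpos : ∀ n, 0 < Q n) (hQ0 : Q 0 = 1) (hQN : Q N ≤ 2) (hQ2N : Q N / 2 ≤ Q (2*N))
    (hstep : ∀ n, g (n+1) = g n + (Q (n+1))⁻¹)
    (hb : ∀ n, n ≤ 2*N → Q n * |g n| ≤ M) :
    (1+1/M)^(N-1) ≤ 4*M := by
  have hM0 : (0:ℝ) < M := by linarith
  have h1M : (0:ℝ) < 1 + 1/M := by positivity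
  by_cases hc : g (N-1) ≤ -(1/4)
  · -- backward contraction case
    have claim : ∀ d, d ≤ N-1 → (1/4) * (1+1/M)^d ≤ -(g (N-1-d)) := by
      intro d
      induction d with
      | zero =>
        intro _
        simp only [pow_zero, mul_one, Nat.sub_zero]
        linarith
      | succ d ih =>
        intro hd
        have ih' := ih (by omega)
        have hj : N-1-d = (N-1-(d+1)) + 1 := by omega
        rw [hj] at ih'
        set j := N-1-(d+1) with hjdef
        have hpow : (0:ℝ) < (1/4) * (1+1/M)^d := by positivity
        have hgj : (0:ℝ) < -(g (j+1)) := lt_of_lt_of_le hpow ih'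
        have hbj := hb (j+1) (by omega)
        rw [abs_of_neg (by linarith : g (j+1) < 0)] at hbj
        have hQj := hQpos (j+1)
        have hinv : -(g (j+1)) * (1/M) ≤ (Q (j+1))⁻¹ := by
          rw [mul_one_div, div_le_iff₀ hM0]
          have h3 := mul_le_mul_of_nonneg_left hbj (inv_nonneg.mpr hQj.le)
          rw [← mul_assoc, inv_mul_cancel₀ hQj.ne', one_mul] at h3
          linarith
        calc (1/4) * (1+1/M)^(d+1) = ((1/4)*(1+1/M)^d) * (1+1/M) := by ring
          _ ≤ (-(g (j+1))) * (1+1/M) := mul_le_mul_of_nonneg_right ih' h1M.le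
          _ = -(g (j+1)) + -(g (j+1)) * (1/M) := by ring
          _ ≤ -(g (j+1)) + (Q (j+1))⁻¹ := by linarith
          _ = -(g j) := by rw [hstep j]; ring
    have h0 := claim (N-1) le_rfl
    rw [(by omega : N-1-(N-1) = 0)] at h0
    have hb0 := hb 0 (by omega)
    rw [hQ0, one_mul] at hb0
    have h00 : -(g 0) ≤ M := le_trans (neg_le_abs _) hb0
    nlinarith [pow_pos h1M (N-1)]
  · -- forward expansion case
    push_neg at hc
    have hQNinv : (2:ℝ)⁻¹ ≤ (Q N)⁻¹ := by
      rw [inv_eq_one_div, inv_eq_one_div]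
      exact one_div_le_one_div_of_le (hQpos N) hQN
    have hstepN := hstep (N-1)
    rw [(by omega : N-1+1 = N)] at hstepN
    have hgN : (1/4:ℝ) < g N := by rw [hstepN]; linarith
    have claim : ∀ k, k ≤ N → g N * (1+1/M)^k ≤ g (N+k) := by
      intro k
      induction k with
      | zero => intro _; simp
      | succ k ih =>
        intro hk
        have ih' := ih (by omega)
        have hposN : (0:ℝ) < g N * (1+1/M)^k := mul_pos (by linarith) (pow_pos h1M k)
        have hpos : (0:ℝ) < g (N+k) := lt_of_lt_of_le hposN ih'
        have hidx : N + (k+1) = N+k+1 := by omega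
        rw [hidx]
        have hst : g (N+k+1) = g (N+k) + (Q (N+k+1))⁻¹ := hstep (N+k)
        have hQp := hQpos (N+k+1)
        have hg1 : g (N+k) ≤ g (N+k+1) := by
          rw [hst]; have := inv_pos.mpr hQp; linarith
        have hb' := hb (N+k+1) (by omega)
        rw [abs_of_pos (lt_of_lt_of_le hpos hg1)] at hb'
        have h2 : Q (N+k+1) * g (N+k) ≤ M :=
          le_trans (mul_le_mul_of_nonneg_left hg1 hQp.le) hb'
        have hinv : g (N+k) * (1/M) ≤ (Q (N+k+1))⁻¹ := by
          rw [mul_one_div, div_le_iff₀ hM0]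
          have h3 := mul_le_mul_of_nonneg_left h2 (inv_nonneg.mpr hQp.le)
          rw [← mul_assoc, inv_mul_cancel₀ hQp.ne', one_mul] at h3
          linarith
        calc g N * (1+1/M)^(k+1) = (g N * (1+1/M)^k) * (1+1/M) := by ring
          _ ≤ g (N+k) * (1+1/M) := mul_le_mul_of_nonneg_right ih' h1M.le
          _ = g (N+k) + g (N+k) * (1/M) := by ring
          _ ≤ g (N+k) + (Q (N+k+1))⁻¹ := by linarith
          _ = g (N+k+1) := hst.symm
    have hfin := claim N le_rfl
    rw [(by omega : N+N = 2*N)] at hfin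
    have hb2 := hb (2*N) le_rfl
    have hg2Npos : (0:ℝ) < g (2*N) :=
      lt_of_lt_of_le (mul_pos (by linarith) (pow_pos h1M N)) hfin
    rw [abs_of_pos hg2Npos] at hb2
    have hQ2p := hQpos (2*N)
    have hQNp := hQpos N
    have h4 : g (2*N) ≤ M / Q (2*N) := (le_div_iff₀ hQ2p).mpr (by linarith)
    have h5 : M / Q (2*N) ≤ M / (Q N / 2) := by
      gcongr
    have h6 : M / (Q N / 2) = 2 * M * (Q N)⁻¹ := by
      rw [div_div_eq_mul_div, div_eq_mul_inv]; ring
    have h7 : (Q N)⁻¹ ≤ 2 * g N := by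
      -- g N = g (N-1) + (Q N)⁻¹  and  g (N-1) > -(1/4) > -(g N)
      have : (Q N)⁻¹ = g N - g (N-1) := by rw [hstepN]; ring
      rw [this]; linarith
    have h8 : g (2*N) ≤ 4 * M * g N := by
      have : g (2*N) ≤ 2*M*(Q N)⁻¹ := by rw [← h6]; exact le_trans h4 h5
      nlinarith
    have h9 : (1+1/M)^N ≤ 4*M := by
      have h10 : (1+1/M)^N * g N ≤ (4*M) * g N := by nlinarith
      exact le_of_mul_le_mul_right h10 (by linarith)
    calc (1+1/M)^(N-1) ≤ (1+1/M)^N := by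
          have h1M' : (0:ℝ) < 1/M := by positivity
          apply pow_le_pow_right₀ (by linarith)
          omega
      _ ≤ 4*M := h9

private lemma exists_good_N (L γ : ℝ) (hL : 0 < L) (hγ0 : 0 < γ) (hγ1 : γ < 1) :
    ∃ N : ℕ, 4 ≤ N ∧ ∀ M : ℝ, 1 ≤ M → M ≤ (1+L) * ((2*N : ℕ) : ℝ)^γ →
      4*M < (1+1/M)^(N-1) := by
  set C : ℝ := 1 + L with hCdef
  have hC1 : (1:ℝ) ≤ C := by simp [hCdef]; linarith
  have hC0 : (0:ℝ) < C := by linarith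
  -- asymptotics : eventually  2*(C*x^γ) * log (4*(C*x^γ)) < x/2 - 1
  have t1 : Filter.Tendsto (fun x : ℝ => x^(γ-1)) Filter.atTop (nhds 0) := by
    have h := tendsto_rpow_neg_atTop (show (0:ℝ) < 1-γ by linarith)
    have : (fun x : ℝ => x^(-(1-γ))) = fun x : ℝ => x^(γ-1) := by
      funext x; ring_nf
    rwa [this] at h
  have t2 : Filter.Tendsto (fun x : ℝ => Real.log x * x^(γ-1)) Filter.atTop (nhds 0) := by
    have h := (isLittleO_log_rpow_atTop (show (0:ℝ) < 1-γ by linarith)).tendsto_div_nhds_zero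
    apply h.congr'
    filter_upwards [Filter.eventually_gt_atTop (0:ℝ)] with x hx
    rw [div_eq_mul_inv, ← Real.rpow_neg hx.le]
    ring_nf
  have t3 : Filter.Tendsto
      (fun x : ℝ => 2*C*(Real.log (4*C) * x^(γ-1) + γ*(Real.log x * x^(γ-1))))
      Filter.atTop (nhds 0) := by
    have := ((t1.const_mul (Real.log (4*C))).add (t2.const_mul γ)).const_mul (2*C)
    simpa using this
  have t4 : Filter.Tendsto
      (fun x : ℝ => (2*(C*x^γ) * Real.log (4*(C*x^γ))) / x) Filter.atTop (nhds 0) := by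
    apply t3.congr'
    filter_upwards [Filter.eventually_gt_atTop (0:ℝ)] with x hx
    have hxγ : (0:ℝ) < x^γ := Real.rpow_pos_of_pos hx γ
    have hlog : Real.log (4*(C*x^γ)) = Real.log (4*C) + γ * Real.log x := by
      rw [show (4:ℝ)*(C*x^γ) = (4*C)*x^γ by ring,
        Real.log_mul (by positivity) (by positivity), Real.log_rpow hx]
    rw [hlog, Real.rpow_sub hx, Real.rpow_one]
    field_simp
  have hE : ∀ᶠ x in Filter.atTop,
      2*(C*x^γ) * Real.log (4*(C*x^γ)) < x/2 - 1 := by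
    have h5 := t4.eventually_lt_const (show (0:ℝ) < 1/8 by norm_num)
    filter_upwards [h5, Filter.eventually_ge_atTop (4:ℝ)] with x h1 h2
    have hx0 : (0:ℝ) < x := by linarith
    have := (div_lt_iff₀ hx0).mp h1
    linarith
  obtain ⟨x₀, hx₀⟩ := Filter.eventually_atTop.mp hE
  refine ⟨max 4 ⌈x₀⌉₊, le_max_left _ _, ?_⟩
  set N : ℕ := max 4 ⌈x₀⌉₊ with hNdef
  have hN4 : 4 ≤ N := le_max_left _ _
  set x : ℝ := ((2*N : ℕ) : ℝ) with hxdef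
  have hxval : x = 2 * (N:ℝ) := by rw [hxdef]; push_cast; ring
  have hxN : x₀ ≤ x := by
    have h1 : x₀ ≤ (⌈x₀⌉₊ : ℝ) := Nat.le_ceil x₀
    have h2 : (⌈x₀⌉₊ : ℝ) ≤ (N : ℝ) := by
      exact_mod_cast Nat.cast_le.mpr (le_max_right 4 ⌈x₀⌉₊)
    have h3 : (N:ℝ) ≤ x := by
      rw [hxval]
      have h0 : (0:ℝ) ≤ (N:ℝ) := by positivity
      linarith
    linarith
  have hmain := hx₀ x hxN
  have hx1 : (1:ℝ) ≤ x := by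
    rw [hxval]
    have : (4:ℝ) ≤ (N:ℝ) := by exact_mod_cast hN4
    linarith
  have hx0 : (0:ℝ) < x := by linarith
  have hxγ1 : (1:ℝ) ≤ x^γ := by
    calc (1:ℝ) = x^(0:ℝ) := (Real.rpow_zero x).symm
      _ ≤ x^γ := Real.rpow_le_rpow_of_exponent_le hx1 hγ0.le
  intro M hM1 hMle
  have hM0 : (0:ℝ) < M := by linarith
  set K : ℝ := C * x^γ with hKdef
  have hK1 : (1:ℝ) ≤ K := by
    calc (1:ℝ) ≤ x^γ := hxγ1
      _ = 1 * x^γ := (one_mul _).symm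
      _ ≤ C * x^γ := by gcongr
  -- 2*M*log(4M) ≤ 2*K*log(4K) < x/2 - 1 = N - 1
  have hlog1 : Real.log (4*M) ≤ Real.log (4*K) :=
    Real.log_le_log (by linarith) (by linarith)
  have hlog0 : (0:ℝ) ≤ Real.log (4*M) := Real.log_nonneg (by linarith)
  have hstep1 : 2*M*Real.log (4*M) ≤ 2*K*Real.log (4*K) := by
    nlinarith [mul_le_mul hMle hlog1 hlog0 (by linarith : (0:ℝ) ≤ K)]
  have hNM : 2*M*Real.log (4*M) < (N:ℝ) - 1 := by
    have : x/2 - 1 = (N:ℝ) - 1 := by rw [hxval]; ring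
    rw [← this]
    calc 2*M*Real.log (4*M) ≤ 2*K*Real.log (4*K) := hstep1
      _ = 2*(C*x^γ) * Real.log (4*(C*x^γ)) := by rw [hKdef]
      _ < x/2 - 1 := hmain
  -- convert to the power inequality
  have hNcast : ((N-1 : ℕ) : ℝ) = (N:ℝ) - 1 := by
    have : 1 ≤ N := by omega
    push_cast [this]
    ring
  have hlog2 : Real.log (4*M) < ((N:ℝ)-1) * Real.log (1+1/M) := by
    have ha : Real.log (4*M) < ((N:ℝ)-1) * (1/(2*M)) := by
      rw [mul_one_div, lt_div_iff₀ (by positivity)]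
      nlinarith
    have hb : ((N:ℝ)-1) * (1/(2*M)) ≤ ((N:ℝ)-1) * Real.log (1+1/M) := by
      apply mul_le_mul_of_nonneg_left (log_lb_aux M hM1)
      have : (4:ℝ) ≤ (N:ℝ) := by exact_mod_cast hN4
      linarith
    linarith
  have h1M : (0:ℝ) < 1 + 1/M := by positivity
  calc 4*M = Real.exp (Real.log (4*M)) := (Real.exp_log (by linarith)).symm
    _ < Real.exp (((N:ℝ)-1) * Real.log (1+1/M)) := Real.exp_lt_exp.mpr hlog2
    _ = (1+1/M)^(N-1) := by
        rw [← hNcast, Real.exp_nat_mul, Real.exp_log h1M]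

/-- Lemma 6.3 ("lemSG8"): in the one-dimensional case, sublinear growth forces,
for some fixed N, strong expansion or strong contraction on every window. -/
theorem one_dim_sublinear_growth_expansion_or_contraction
    (R : ℝ) (hR : 1 < R) (a : ℤ → ℝ) (ha : ∀ n : ℤ, a n ≠ 0)
    (haBound : ∀ n : ℤ, 1 / R < |a n| ∧ |a n| < R)
    (lam : ℤ → ℝ) (hlam : ∀ n : ℤ, lam n = |a n|)
    (γ : ℝ) (hγ : γ ∈ Set.Ioo (0 : ℝ) 1) (hSG : SG1 a γ) :
    ∃ N : ℕ, 1 ≤ N ∧ ∀ i : ℤ,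
      Pii lam i N > 2 ∨ Pii lam (i + N) N < 1 / 2 := by
  obtain ⟨hγ0, hγ1⟩ := hγ
  obtain ⟨L, hL, hSG⟩ := hSG
  by_contra hcon
  push_neg at hcon
  obtain ⟨N, hN4, hgood⟩ := exists_good_N L γ hL hγ0 hγ1
  obtain ⟨i, hPi1, hPi2⟩ := hcon N (by omega)
  -- set up the signed products
  set P : ℕ → ℝ := fun n => ∏ j ∈ Finset.range n, a (i + (j:ℤ)) with hPdef
  have hPne : ∀ n, P n ≠ 0 := by
    intro n
    simp only [hPdef]
    exact Finset.prod_ne_zero_iff.mpr (fun j _ => ha _)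
  set Q : ℕ → ℝ := fun n => |P n| with hQdef
  have hQpos : ∀ n, 0 < Q n := fun n => abs_pos.mpr (hPne n)
  have hQ0 : Q 0 = 1 := by simp [hQdef, hPdef]
  have hQPii : ∀ n : ℕ, Q n = Pii lam i n := by
    intro n
    simp only [hQdef, hPdef, Pii, Finset.abs_prod]
    exact Finset.prod_congr rfl (fun j _ => (hlam _).symm)
  have hQN : Q N ≤ 2 := by rw [hQPii]; exact hPi1
  have hsplit : Q (2*N) = Q N * Pii lam (i + N) N := by
    have hP2 : P (2*N) = P N * ∏ j ∈ Finset.range N, a (i + (N:ℤ) + (j:ℤ)) := by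
      simp only [hPdef]
      rw [two_mul, Finset.prod_range_add]
      congr 1
      exact Finset.prod_congr rfl (fun j _ => by congr 1; push_cast; ring)
    simp only [hQdef]
    rw [hP2, abs_mul]
    congr 1
    rw [Finset.abs_prod]
    simp only [Pii]
    exact Finset.prod_congr rfl (fun j _ => (hlam _).symm)
  have hQ2N : Q N / 2 ≤ Q (2*N) := by
    rw [hsplit]
    have := hQpos N
    nlinarith [hPi2]
  -- signs
  set s : ℕ → ℝ := fun n => P n / Q n with hsdef
  have hs_abs : ∀ n, |s n| = 1 := by
    intro n
    simp only [hsdef, abs_div, hQdef, abs_abs]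
    exact div_self (abs_ne_zero.mpr (hPne n))
  have hs2 : s (2*N) * s (2*N) = 1 := by
    have h1 : |s (2*N) * s (2*N)| = 1 := by rw [abs_mul, hs_abs]; norm_num
    have h2 : (0:ℝ) ≤ s (2*N) * s (2*N) := mul_self_nonneg _
    rw [abs_of_nonneg h2] at h1
    exact h1
  -- the forcing sequence
  set w : ℤ → ℝ := fun k => s (2*N) * s ((k - i).toNat) with hwdef
  have hw1 : ∀ k, |w k| = 1 := by
    intro k
    simp only [hwdef, abs_mul, hs_abs]
    norm_num
  obtain ⟨v, hrec, hvb⟩ := hSG i (2*N) (by omega) w (fun k _ _ => le_of_eq (hw1 k))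
  set T : ℕ → ℝ := fun n => ∑ m ∈ Finset.range n, (Q (m+1))⁻¹ with hTdef
  -- the explicit solution formula
  have hform : ∀ n : ℕ, n ≤ 2*N → v (i + (n:ℤ)) = P n * (v i + s (2*N) * T n) := by
    intro n
    induction n with
    | zero => intro _; simp [hPdef, hTdef]
    | succ n ih =>
      intro hn
      have hih := ih (by omega)
      have hr := hrec (i + (n:ℤ)) (by omega) (by push_cast; omega)
      have hcast : i + ((n+1:ℕ) : ℤ) = i + (n:ℤ) + 1 := by push_cast; ring
      have hwval : w (i + (n:ℤ) + 1) = s (2*N) * s (n+1) := by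
        have h' : i + (n:ℤ) + 1 - i = ((n+1 : ℕ) : ℤ) := by push_cast; ring
        simp only [hwdef, h', Int.toNat_natCast]
      have hP : P (n+1) = P n * a (i + (n:ℤ)) := by
        simp only [hPdef]; exact Finset.prod_range_succ _ _
      have hT : T (n+1) = T n + (Q (n+1))⁻¹ := by
        simp only [hTdef]; exact Finset.sum_range_succ _ _
      have hsv : s (n+1) = P (n+1) * (Q (n+1))⁻¹ := by
        simp only [hsdef]; rw [div_eq_mul_inv]
      rw [hcast, hr, hih, hwval, hsv, hP, hT]
      ring
  -- bound data
  set M : ℝ := max 1 (L * ((2*N : ℕ) : ℝ)^γ) with hMdef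
  have hM1 : (1:ℝ) ≤ M := le_max_left _ _
  set g : ℕ → ℝ := fun n => s (2*N) * v i + T n with hgdef
  have hgstep : ∀ n, g (n+1) = g n + (Q (n+1))⁻¹ := by
    intro n
    simp only [hgdef, hTdef, Finset.sum_range_succ]
    ring
  have hbg : ∀ n, n ≤ 2*N → Q n * |g n| ≤ M := by
    intro n hn
    have hv := hvb (i + (n:ℤ)) (by omega) (by push_cast; omega)
    rw [hform n hn] at hv
    have hval : P n * (v i + s (2*N) * T n) = P n * s (2*N) * g n := by
      simp only [hgdef]
      rw [show P n * s (2*N) * (s (2*N) * v i + T n)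
          = P n * ((s (2*N) * s (2*N)) * v i + s (2*N) * T n) from by ring, hs2, one_mul]
    rw [hval, abs_mul, abs_mul, hs_abs, mul_one] at hv
    calc Q n * |g n| = |P n| * |g n| := by simp only [hQdef]
      _ ≤ L * ((2*N : ℕ) : ℝ)^γ := hv
      _ ≤ M := le_max_right _ _
  have hcore := core_lemma M hM1 N (by omega) Q g hQpos hQ0 hQN hQ2N hgstep hbg
  -- choose the contradiction
  have hx1 : (1:ℝ) ≤ ((2*N : ℕ) : ℝ) := by
    have : 1 ≤ 2*N := by omega
    exact_mod_cast this
  have hxγ1 : (1:ℝ) ≤ ((2*N : ℕ) : ℝ)^γ := by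
    calc (1:ℝ) = ((2*N : ℕ) : ℝ)^(0:ℝ) := (Real.rpow_zero _).symm
      _ ≤ ((2*N : ℕ) : ℝ)^γ := Real.rpow_le_rpow_of_exponent_le hx1 hγ0.le
  have hMle : M ≤ (1+L) * ((2*N : ℕ) : ℝ)^γ := by
    rw [hMdef]
    apply max_le
    · nlinarith [mul_le_mul_of_nonneg_left hxγ1 hL.le]
    · nlinarith [hxγ1]
  have := hgood M hM1 hMle
  linarith
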